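/- Let 0 < p < 1/2. For every n ≥ 1 and every pair of distinct words u ≠ w in {1,2,3}ⁿ, the sets proj(G_u(W°)) and proj(G_w(W°)) are disjoint, where for a word w = (j₁,…,jₙ) the map G_w is the composition G_{j₁} ∘ ⋯ ∘ G_{jₙ} and W° is the interior of W. -/

import Mathlib

open Matrix MeasureTheory Filter
open scoped ENNReal

noncomputable section

abbrev E3 : Type := EuclideanSpace ℝ (Fin 3)
abbrev Mat3 : Type := Matrix (Fin 3) (Fin 3) ℝ

/-- The action of a matrix on Euclidean 3-space. -/
noncomputable def matApply (A : Mat3) (x : E3) : E3 := Matrix.toEuclideanCLM (𝕜 := ℝ) A x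

/-- The largest singular value `α₁(A) = ‖A‖` (Euclidean operator norm). -/
noncomputable def sv1 (A : Mat3) : ℝ := ‖Matrix.toEuclideanCLM (𝕜 := ℝ) A‖

/-- The smallest singular value `α₃(A) = ‖A⁻¹‖⁻¹`. -/
noncomputable def sv3 (A : Mat3) : ℝ := (‖Matrix.toEuclideanCLM (𝕜 := ℝ) A⁻¹‖)⁻¹

/-- The middle singular value `α₂(A) = |det A| / (α₁(A) α₃(A))`. -/
noncomputable def sv2 (A : Mat3) : ℝ := |A.det| / (sv1 A * sv3 A)

/-- Falconer's singular value function `φ^s(A)`. -/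
noncomputable def svf (s : ℝ) (A : Mat3) : ℝ :=
  if s ≤ 1 then (sv1 A) ^ s
  else if s ≤ 2 then sv1 A * (sv2 A) ^ (s - 1)
  else if s ≤ 3 then sv1 A * sv2 A * (sv3 A) ^ (s - 2)
  else (sv1 A * sv2 A * sv3 A) ^ (s / 3)

/-- The three matrices `C₁, C₂, C₃` (with 0-based indexing). -/
def Cmat (p : ℝ) : Fin 3 → Mat3 :=
  ![!![1 - 2*p, -p, -p; 0, p, 0; 0, 0, p],
    !![p, 0, 0; -p, 1 - 2*p, -p; 0, 0, p],
    !![p, 0, 0; 0, p, 0; -p, -p, 1 - 2*p]]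

/-- The product `C_w = C_{j₁} ⋯ C_{jₙ}` along a word `w = (j₁, …, jₙ)`. -/
noncomputable def Cword (p : ℝ) {n : ℕ} (w : Fin n → Fin 3) : Mat3 :=
  ((List.ofFn w).map (Cmat p)).prod

/-- standard basis vectors of `E3` -/
noncomputable def eVec (i : Fin 3) : E3 := EuclideanSpace.single i 1

/-- The affine map `G_i(x) = C_i x + 2p·e_i`. -/
noncomputable def Gmap (p : ℝ) (i : Fin 3) (x : E3) : E3 :=
  matApply (Cmat p i) x + (2 * p) • eVec i

/-- The composition `G_w = G_{j₁} ∘ ⋯ ∘ G_{jₙ}` along a word `w = (j₁, …, jₙ)`. -/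
noncomputable def Gword (p : ℝ) {n : ℕ} (w : Fin n → Fin 3) : E3 → E3 :=
  ((List.ofFn w).map (Gmap p)).foldr (· ∘ ·) id

/-- Summability of the double series `Σ_{n=1}^∞ Σ_{w ∈ {1,2,3}ⁿ} φ^s(C_w)`
(all terms are nonnegative, so summability is equivalent to finiteness of the sum). -/
def seriesSummable (p s : ℝ) : Prop :=
  Summable (fun x : Σ n : ℕ, (Fin (n+1) → Fin 3) => svf s (Cword p x.2))

/-- The affinity dimension `s₀ = inf{s > 0 : Σ_n Σ_w φ^s(C_w) < ∞}`. -/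
noncomputable def s0 (p : ℝ) : ℝ := sInf {s : ℝ | 0 < s ∧ seriesSummable p s}

/-- The minimal number of balls of radius `δ` needed to cover `A`. -/
noncomputable def coverNum (A : Set E3) (δ : ℝ) : ℕ :=
  sInf {n : ℕ | ∃ t : Finset E3, t.card = n ∧ A ⊆ ⋃ x ∈ t, Metric.ball x δ}

/-- The upper box-counting dimension `limsup_{δ→0⁺} log N_δ(A) / (−log δ)`. -/
noncomputable def upperBoxDim (A : Set E3) : ℝ :=
  Filter.limsup (fun δ : ℝ => Real.log (coverNum A δ) / (-Real.log δ))
    (nhdsWithin 0 (Set.Ioi 0))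

/-- The vector `(1,1,1)`. -/
noncomputable def onesVec : E3 := (WithLp.equiv 2 (Fin 3 → ℝ)).symm ![1, 1, 1]

/-- Orthogonal projection of `ℝ³` onto the plane `V = {x : x₁ + x₂ + x₃ = 0}`. -/
noncomputable def projV (x : E3) : E3 := x - (((x 0) + (x 1) + (x 2)) / 3) • onesVec

/-- The vector `(a,b,c)` in `E3`. -/
noncomputable def vec3 (a b c : ℝ) : E3 := (WithLp.equiv 2 (Fin 3 → ℝ)).symm ![a, b, c]

/-- The triangle `T₀ = conv{e₁, e₂, e₃}`. -/
noncomputable def T0set : Set E3 := convexHull ℝ {eVec 0, eVec 1, eVec 2}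

/-- The standard tetrahedron `W = conv{0, e₁, e₂, e₃}`. -/
noncomputable def Wset : Set E3 := convexHull ℝ {0, eVec 0, eVec 1, eVec 2}

/-- The triangle `T_ε = conv{(1−2ε,ε,ε), (ε,1−2ε,ε), (ε,ε,1−2ε)}`. -/
noncomputable def Ttri (ε : ℝ) : Set E3 :=
  convexHull ℝ {vec3 (1 - 2*ε) ε ε, vec3 ε (1 - 2*ε) ε, vec3 ε ε (1 - 2*ε)}

/- ===== auxiliary lemmas for proj_cylinders_disjoint ===== -/

lemma matApply_coord (A : Mat3) (x : E3) (k : Fin 3) :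
    matApply A x k = A k 0 * x 0 + A k 1 * x 1 + A k 2 * x 2 := by
  have h : matApply A x k = A.mulVec (fun j => x j) k := rfl
  rw [h]
  simp [Matrix.mulVec, dotProduct, Fin.sum_univ_three]

lemma C_apply (p : ℝ) (i : Fin 3) (x : E3) (k : Fin 3) :
    matApply (Cmat p i) x k =
      if k = i then (1-2*p) * x i - p * (x 0 + x 1 + x 2 - x i) else p * x k := by
  rw [matApply_coord]
  fin_cases i <;> fin_cases k <;>
    simp [Cmat, Matrix.vecHead, Matrix.vecTail] <;> ring

lemma matApply_mulmat (A B : Mat3) (v : E3) :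
    matApply (A*B) v = matApply A (matApply B v) := by
  unfold matApply; rw [_root_.map_mul]; rfl

lemma matApply_onemat (v : E3) : matApply 1 v = v := by unfold matApply; simp

lemma matApply_negvec (A : Mat3) (v : E3) : matApply A (-v) = -(matApply A v) := by
  unfold matApply; simp

lemma Gmap_sub (p : ℝ) (i : Fin 3) (x y : E3) :
    Gmap p i x - Gmap p i y = matApply (Cmat p i) (x - y) := by
  unfold Gmap matApply; rw [map_sub]; abel

lemma ones_apply (k : Fin 3) : onesVec k = 1 := by fin_cases k <;> rfl

lemma Gmap_apply (p : ℝ) (i : Fin 3) (x : E3) (k : Fin 3) :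
    Gmap p i x k =
      if k = i then (1-2*p) * x i - p * (x 0 + x 1 + x 2 - x i) + 2*p else p * x k := by
  have h : Gmap p i x k = matApply (Cmat p i) x k + (2*p) * (if k = i then 1 else 0) := by
    simp [Gmap, eVec, EuclideanSpace.single_apply]
  rw [h, C_apply]
  split_ifs <;> ring

/-- the open region `O`. -/
def OposP (x : E3) : Prop := (∀ k, 0 < x k) ∧ x 0 + x 1 + x 2 < 1

lemma rest_pos {x : E3} (h : ∀ k, 0 < x k) (m : Fin 3) :
    0 < x 0 + x 1 + x 2 - x m := by
  have h0 := h 0; have h1 := h 1; have h2 := h 2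
  have hm : x m = x 0 ∨ x m = x 1 ∨ x m = x 2 := by fin_cases m <;> simp
  rcases hm with hm|hm|hm <;> rw [hm] <;> linarith

lemma Gmap_self_big (p : ℝ) (hp0 : 0 < p) (hp1 : p < 1/2) (i : Fin 3) {x : E3}
    (hx : OposP x) : p < Gmap p i x i := by
  rw [Gmap_apply, if_pos rfl]
  have hxi := hx.1 i
  have hrest := rest_pos hx.1 i
  have hS := hx.2
  nlinarith [mul_pos (show (0:ℝ) < 1-2*p by linarith) hxi,
    mul_lt_mul_of_pos_left (show x 0 + x 1 + x 2 - x i < 1 by linarith) hp0]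

lemma Gmap_other_small (p : ℝ) (hp0 : 0 < p) (hp1 : p < 1/2) (i k : Fin 3) (hk : k ≠ i)
    {x : E3} (hx : OposP x) : Gmap p i x k < p := by
  rw [Gmap_apply, if_neg hk]
  have hrest := rest_pos hx.1 k
  have hS := hx.2
  nlinarith [mul_lt_mul_of_pos_left (show x k < 1 by linarith) hp0]

lemma Gmap_mapsO (p : ℝ) (hp0 : 0 < p) (hp1 : p < 1/2) (i : Fin 3) {x : E3}
    (hx : OposP x) : OposP (Gmap p i x) := by
  have hx0 : x 0 < 1 := by have := rest_pos hx.1 0; linarith [hx.2]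
  have hx1 : x 1 < 1 := by have := rest_pos hx.1 1; linarith [hx.2]
  have hx2 : x 2 < 1 := by have := rest_pos hx.1 2; linarith [hx.2]
  constructor
  · intro k
    by_cases hk : k = i
    · subst hk; linarith [Gmap_self_big p hp0 hp1 k hx]
    · rw [Gmap_apply, if_neg hk]; exact mul_pos hp0 (hx.1 k)
  · rw [Gmap_apply, Gmap_apply, Gmap_apply]
    fin_cases i <;> simp <;>
      nlinarith [mul_pos (show (0:ℝ) < 1-2*p by linarith) (show (0:ℝ) < 1 - x 0 by linarith),
        mul_pos (show (0:ℝ) < 1-2*p by linarith) (show (0:ℝ) < 1 - x 1 by linarith),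
        mul_pos (show (0:ℝ) < 1-2*p by linarith) (show (0:ℝ) < 1 - x 2 by linarith),
        hx.1 0, hx.1 1, hx.1 2]

/-- case analysis for `Fin 3` -/
lemma fin3_cases (i : Fin 3) : i = 0 ∨ i = 1 ∨ i = 2 := by
  rcases i with ⟨iv, hiv⟩
  interval_cases iv
  · exact Or.inl rfl
  · exact Or.inr (Or.inl rfl)
  · exact Or.inr (Or.inr rfl)

/-- inverse matrices preserve the nonnegative cone -/
lemma cone_back (p : ℝ) (hp0 : 0 < p) (hp1 : p < 1/2) (i : Fin 3) {v : E3}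
    (h : ∀ k, 0 ≤ matApply (Cmat p i) v k) : ∀ k, 0 ≤ v k := by
  have hother : ∀ k, k ≠ i → 0 ≤ v k := by
    intro k hk
    have hh := h k
    rw [C_apply, if_neg hk] at hh
    nlinarith
  intro k
  by_cases hk : k = i
  · subst hk
    have hh := h k
    rw [C_apply, if_pos rfl] at hh
    have hrest : 0 ≤ v 0 + v 1 + v 2 - v k := by
      rcases fin3_cases k with rfl | rfl | rfl
      · have a1 := hother 1 (by decide); have a2 := hother 2 (by decide); linarith
      · have a1 := hother 0 (by decide); have a2 := hother 2 (by decide); linarith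
      · have a1 := hother 0 (by decide); have a2 := hother 1 (by decide); linarith
    nlinarith [mul_nonneg hp0.le hrest]
  · exact hother k hk

/- word / list machinery -/
noncomputable def GLw (p : ℝ) (l : List (Fin 3)) : E3 → E3 :=
  (l.map (Gmap p)).foldr (· ∘ ·) id

noncomputable def CLw (p : ℝ) (l : List (Fin 3)) : Mat3 := (l.map (Cmat p)).prod

lemma GLw_cons (p : ℝ) (i : Fin 3) (l : List (Fin 3)) (x : E3) :
    GLw p (i :: l) x = Gmap p i (GLw p l x) := rfl

lemma GLw_append (p : ℝ) (l₁ l₂ : List (Fin 3)) (x : E3) :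
    GLw p (l₁ ++ l₂) x = GLw p l₁ (GLw p l₂ x) := by
  induction l₁ with
  | nil => rfl
  | cons a t ih => rw [List.cons_append, GLw_cons, GLw_cons, ih]

lemma CLw_cons (p : ℝ) (i : Fin 3) (l : List (Fin 3)) :
    CLw p (i :: l) = Cmat p i * CLw p l := by simp [CLw]

lemma Gword_eq_GLw (p : ℝ) {n : ℕ} (w : Fin n → Fin 3) :
    Gword p w = GLw p (List.ofFn w) := rfl

lemma GLw_sub (p : ℝ) (l : List (Fin 3)) (x y : E3) :
    GLw p l x - GLw p l y = matApply (CLw p l) (x - y) := by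
  induction l with
  | nil => show x - y = matApply (CLw p []) (x - y); rw [show CLw p [] = 1 from rfl, matApply_onemat]
  | cons a t ih =>
      rw [GLw_cons, GLw_cons, Gmap_sub, ih, CLw_cons, matApply_mulmat]

lemma GLw_mapsO (p : ℝ) (hp0 : 0 < p) (hp1 : p < 1/2) (l : List (Fin 3)) {x : E3}
    (hx : OposP x) : OposP (GLw p l x) := by
  induction l with
  | nil => exact hx
  | cons a t ih => rw [GLw_cons]; exact Gmap_mapsO p hp0 hp1 a ih

lemma sign_GLw (p : ℝ) (hp0 : 0 < p) (hp1 : p < 1/2) (l : List (Fin 3)) {v : E3}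
    (h : (∀ k, 0 ≤ matApply (CLw p l) v k) ∨ (∀ k, matApply (CLw p l) v k ≤ 0)) :
    (∀ k, 0 ≤ v k) ∨ (∀ k, v k ≤ 0) := by
  induction l with
  | nil =>
      rw [show CLw p [] = 1 from rfl, matApply_onemat] at h
      exact h
  | cons a t ih =>
      rw [CLw_cons] at h
      apply ih
      rcases h with h | h
      · left
        have := cone_back p hp0 hp1 a (v := matApply (CLw p t) v)
          (fun k => by rw [← matApply_mulmat]; exact h k)
        exact this
      · right
        have hneg : ∀ k, 0 ≤ matApply (Cmat p a) (-(matApply (CLw p t) v)) k := by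
          intro k
          rw [matApply_negvec]
          have hk := h k
          rw [matApply_mulmat] at hk
          simp only [PiLp.neg_apply]
          linarith
        have := cone_back p hp0 hp1 a hneg
        intro k
        have hk := this k
        simp only [PiLp.neg_apply] at hk
        linarith

lemma word_split : ∀ (l₁ l₂ : List (Fin 3)), l₁.length = l₂.length → l₁ ≠ l₂ →
    ∃ (a : List (Fin 3)) (i j : Fin 3) (t₁ t₂ : List (Fin 3)),
      i ≠ j ∧ l₁ = a ++ i :: t₁ ∧ l₂ = a ++ j :: t₂ := by
  intro l₁
  induction l₁ with
  | nil =>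
      intro l₂ hl hne
      cases l₂ with
      | nil => exact absurd rfl hne
      | cons b s => simp at hl
  | cons a t ih =>
      intro l₂ hl hne
      cases l₂ with
      | nil => simp at hl
      | cons b s =>
          by_cases hab : a = b
          · subst hab
            have hts : t ≠ s := fun h => hne (by rw [h])
            obtain ⟨c, i, j, t₁, t₂, hij, h1, h2⟩ := ih s (by simpa using hl) hts
            exact ⟨a :: c, i, j, t₁, t₂, hij, by simp [h1], by simp [h2]⟩
          · exact ⟨[], a, b, t, s, hab, rfl, rfl⟩

lemma W_props {x : E3} (hx : x ∈ Wset) :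
    (∀ k, 0 ≤ x k) ∧ x 0 + x 1 + x 2 ≤ 1 := by
  have hsub : Wset ⊆ {y : E3 | (∀ k, 0 ≤ y k) ∧ y 0 + y 1 + y 2 ≤ 1} := by
    apply convexHull_min
    · intro y hy
      simp only [Set.mem_insert_iff, Set.mem_singleton_iff] at hy
      rcases hy with rfl | rfl | rfl | rfl
      · constructor
        · intro k; simp
        · simp
      all_goals
        constructor
        · intro k
          simp only [eVec, EuclideanSpace.single_apply]
          split <;> norm_num
        · simp [eVec, EuclideanSpace.single_apply]
    · intro z hz z' hz' α β hα hβ hαβ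
      constructor
      · intro k
        have h1 := hz.1 k; have h2 := hz'.1 k
        simp only [PiLp.add_apply, PiLp.smul_apply, smul_eq_mul]
        nlinarith
      · simp only [PiLp.add_apply, PiLp.smul_apply, smul_eq_mul]
        nlinarith [hz.2, hz'.2]
  exact hsub hx

lemma interior_W_subset {x : E3} (hx : x ∈ interior Wset) : OposP x := by
  rw [mem_interior_iff_mem_nhds, Metric.mem_nhds_iff] at hx
  obtain ⟨ε, hε, hball⟩ := hx
  have hnorm : ∀ k : Fin 3, ‖(ε/2) • eVec k‖ = ε/2 := by
    intro k
    rw [norm_smul, eVec, EuclideanSpace.norm_single]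
    simp [abs_of_pos hε]
  constructor
  · intro k
    have hyW : x - (ε/2) • eVec k ∈ Wset := by
      apply hball
      rw [Metric.mem_ball, dist_eq_norm]
      have h1 : x - (ε/2) • eVec k - x = -((ε/2) • eVec k) := by abel
      rw [h1, norm_neg, hnorm]
      linarith
    have h2 := (W_props hyW).1 k
    have h3 : (x - (ε/2) • eVec k) k = x k - ε/2 := by
      simp [eVec, EuclideanSpace.single_apply]
    rw [h3] at h2
    linarith
  · have hyW : x + (ε/2) • eVec 0 ∈ Wset := by
      apply hball
      rw [Metric.mem_ball, dist_eq_norm]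
      have h1 : x + (ε/2) • eVec 0 - x = (ε/2) • eVec 0 := by abel
      rw [h1, hnorm]
      linarith
    have h2 := (W_props hyW).2
    have e0 : (x + (ε/2) • eVec 0) 0 = x 0 + ε/2 := by
      simp [eVec, EuclideanSpace.single_apply]
    have e1 : (x + (ε/2) • eVec 0) 1 = x 1 := by
      simp [eVec, EuclideanSpace.single_apply]
    have e2 : (x + (ε/2) • eVec 0) 2 = x 2 := by
      simp [eVec, EuclideanSpace.single_apply]
    rw [e0, e1, e2] at h2
    linarith

/-- Lemma (projections of the open cylinder sets are pairwise disjoint). -/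
theorem proj_cylinders_disjoint (p : ℝ) (hp0 : 0 < p) (hp1 : p < 1/2)
    (n : ℕ) (hn : 1 ≤ n) (u w : Fin n → Fin 3) (huw : u ≠ w) :
    Disjoint (projV '' (Gword p u '' interior Wset))
      (projV '' (Gword p w '' interior Wset)) := by
  rw [Set.disjoint_left]
  rintro q ⟨_, ⟨x, hx, rfl⟩, rfl⟩ ⟨_, ⟨y, hy, rfl⟩, hpq⟩
  obtain ⟨a, i, j, t₁, t₂, hij, h1, h2⟩ :=
    word_split (List.ofFn u) (List.ofFn w) (by simp)
      (fun h => huw (List.ofFn_injective h))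
  set ζ : E3 := Gmap p i (GLw p t₁ x) with hζdef
  set ζ' : E3 := Gmap p j (GLw p t₂ y) with hζ'def
  have hZu : Gword p u x = GLw p a ζ := by
    rw [Gword_eq_GLw, h1, GLw_append, GLw_cons]
  have hZw : Gword p w y = GLw p a ζ' := by
    rw [Gword_eq_GLw, h2, GLw_append, GLw_cons]
  have hxO : OposP (GLw p t₁ x) := GLw_mapsO p hp0 hp1 t₁ (interior_W_subset hx)
  have hyO : OposP (GLw p t₂ y) := GLw_mapsO p hp0 hp1 t₂ (interior_W_subset hy)
  have hζi : p < ζ i := Gmap_self_big p hp0 hp1 i hxO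
  have hζj : ζ j < p := Gmap_other_small p hp0 hp1 i j (Ne.symm hij) hxO
  have hζ'j : p < ζ' j := Gmap_self_big p hp0 hp1 j hyO
  have hζ'i : ζ' i < p := Gmap_other_small p hp0 hp1 j i hij hyO
  set Z : E3 := GLw p a ζ with hZdef
  set Z' : E3 := GLw p a ζ' with hZ'def
  have hpq' : projV Z' = projV Z := by rw [← hZu, ← hZw]; exact hpq
  set c : ℝ := ((Z 0 + Z 1 + Z 2) - (Z' 0 + Z' 1 + Z' 2))/3 with hc
  have hco : ∀ k : Fin 3, Z k - Z' k = c := by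
    intro k
    have h := congrArg (fun v : E3 => v k) hpq'
    simp only [projV, PiLp.sub_apply, PiLp.smul_apply, smul_eq_mul, ones_apply,
      mul_one] at h
    rw [hc]
    linarith
  have hmA : ∀ k : Fin 3, matApply (CLw p a) (ζ - ζ') k = Z k - Z' k := by
    intro k
    rw [← GLw_sub]
    simp only [PiLp.sub_apply]
    rfl
  have hWS : (∀ k, 0 ≤ (ζ - ζ') k) ∨ (∀ k, (ζ - ζ') k ≤ 0) := by
    apply sign_GLw p hp0 hp1 a
    rcases le_total 0 c with h | h
    · left; intro k; rw [hmA k, hco k]; exact h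
    · right; intro k; rw [hmA k, hco k]; exact h
  rcases hWS with h | h
  · have hk := h j
    simp only [PiLp.sub_apply] at hk
    linarith
  · have hk := h i
    simp only [PiLp.sub_apply] at hk
    linarith
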